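/- Let (S, Σ) be a typed signature: S : J → ℕ an algebraic signature for types, and Σ a family of classic term arities over S, each of some degree n. Then the category of representations of (S, Σ) — whose objects are S-monads (T, P) equipped with, for every arity α ∈ Σ of degree n as below and every t ∈ T^n, a module morphism α^P_t : dom(α, P)_t → cod(α, P)_t, and whose morphisms are S-monad morphisms (g, f) making, for every arity and every t ∈ T^n, the square relating α^P_t and α^R_{g∘t} via the term translation f commute — has an initial object. Its underlying type representation is the initial representation Ŝ of S, and its underlying monad is the term monad on [Ŝ, Type] generated inductively by one constructor family α_t(V) : Π_i P^{ℓ_i(Ŝ,t)}(V)_{σ_i(Ŝ,t)} → P(V)_{σ_0(Ŝ,t)} for each arity α ∈ Σ together with variables-as-terms. -/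

import Mathlib

open CategoryTheory

/-! ### Algebraic signatures and their representations (for types/sorts) -/

/-- A representation of the algebraic signature `S : J → ℕ`. -/
structure SRep {J : Type} (S : J → ℕ) : Type 1 where
  carrier : Type
  op : ∀ j : J, (Fin (S j) → carrier) → carrier

/-- A morphism of representations of `S`. -/
structure SRepHom {J : Type} {S : J → ℕ} (A B : SRep S) where
  toFun : A.carrier → B.carrier
  compat : ∀ (j : J) (a : Fin (S j) → A.carrier),
      toFun (A.op j a) = B.op j (fun i => toFun (a i))

/-- The types freely generated by `S`: the initial representation `Ŝ`. -/
inductive What {J : Type} (S : J → ℕ) : Type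
  | mk (j : J) (a : Fin (S j) → What S) : What S

/-- `Ŝ` as a representation of `S`. -/
def initSRep {J : Type} (S : J → ℕ) : SRep S :=
  ⟨What S, fun j a => What.mk j a⟩

/-! ### Types of degree `n` -/

/-- Types of degree `n` over `S`: types freely generated by `S` together with `n`
free type variables. -/
inductive TyDeg {J : Type} (S : J → ℕ) (n : ℕ) : Type
  | var : Fin n → TyDeg S n
  | op (j : J) (args : Fin (S j) → TyDeg S n) : TyDeg S n

/-- Evaluation of a type of degree `n` in a representation `A` of `S`, at a vector
`t ∈ A^n` of values for the type variables. -/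
def TyDeg.eval {J : Type} {S : J → ℕ} (A : SRep S) {n : ℕ}
    (t : Fin n → A.carrier) : TyDeg S n → A.carrier
  | .var i => t i
  | .op j args => A.op j (fun i => (args i).eval A t)

theorem TyDeg.eval_comm {J : Type} {S : J → ℕ} {A B : SRep S} (g : SRepHom A B)
    {n : ℕ} (t : Fin n → A.carrier) :
    ∀ s : TyDeg S n,
      TyDeg.eval B (fun i => g.toFun (t i)) s = g.toFun (TyDeg.eval A t s)
  | .var i => rfl
  | .op j args => by
      simp only [TyDeg.eval, g.compat]
      congr 1
      funext i
      exact TyDeg.eval_comm g t (args i)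

theorem TyDeg.evalList_comm {J : Type} {S : J → ℕ} {A B : SRep S} (g : SRepHom A B)
    {n : ℕ} (t : Fin n → A.carrier) (l : List (TyDeg S n)) :
    l.map (TyDeg.eval B (fun i => g.toFun (t i))) =
      (l.map (TyDeg.eval A t)).map g.toFun := by
  rw [List.map_map]
  apply List.map_congr_left
  intro s _
  exact TyDeg.eval_comm g t s

/-! ### Contexts, context extension, retyping -/

/-- The context `V` extended by one fresh variable of sort `u`. -/
def extC {T : Type} (V : T → Type) (u : T) : T → Type :=
  fun t => V t ⊕ PLift (t = u)

/-- Functorial action of context extension. -/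
def extCMap {T : Type} {V W : T → Type} (f : V ⟶ W) (u : T) :
    extC V u ⟶ extC W u :=
  fun t => TypeCat.ofHom fun x => x.elim (fun v => Sum.inl (f t v)) Sum.inr

/-- The context `V` extended by a fresh variable for each element of a list of
sorts. -/
def extList {T : Type} (V : T → Type) : List T → (T → Type)
  | [] => V
  | u :: l => extC (extList V l) u

/-- Functorial action of iterated context extension. -/
def extListMap {T : Type} {V W : T → Type} (f : V ⟶ W) :
    ∀ l : List T, extList V l ⟶ extList W l
  | [] => f
  | u :: l => extCMap (extListMap f l) u

/-- Object part of the retyping functor along `g : T → T'`. -/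
def retypeObj {T T' : Type} (g : T → T') (V : T → Type) : T' → Type :=
  fun t' => Σ t : {t : T // g t = t'}, V t.1

/-- Morphism part of the retyping functor along `g : T → T'`. -/
def retypeMap {T T' : Type} (g : T → T') {V W : T → Type} (f : V ⟶ W) :
    retypeObj g V ⟶ retypeObj g W :=
  fun _ => TypeCat.ofHom fun p => ⟨p.1, f p.1.1 p.2⟩

/-- The colax structure of context extension over a monad `P`:
`(P V)^{*u} ⟶ P (V^{*u})`. -/
def gammaC {T : Type} (P : CategoryTheory.Monad (T → Type)) (u : T)
    (V : T → Type) : extC (P.obj V) u ⟶ P.obj (extC V u) :=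
  fun t => TypeCat.ofHom fun x =>
    x.elim (fun p => P.map (fun _ => TypeCat.ofHom fun v => (Sum.inl v : extC V u _)) t p)
      (fun h => P.η.app (extC V u) t (Sum.inr h))

/-- The colax structure of iterated context extension over a monad `P`. -/
def gammaList {T : Type} (P : CategoryTheory.Monad (T → Type)) :
    ∀ (l : List T) (V : T → Type), extList (P.obj V) l ⟶ P.obj (extList V l)
  | [], V => 𝟙 (P.obj V)
  | u :: l, V => extCMap (gammaList P l V) u ≫ gammaC P u (extList V l)

/-- Retyping commutes with context extension by one variable. -/
def dC {T T' : Type} (g : T → T') (V : T → Type) (u : T) :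
    retypeObj g (extC V u) ⟶ extC (retypeObj g V) (g u) :=
  fun _ => TypeCat.ofHom fun p =>
    match p with
    | ⟨⟨t, ht⟩, Sum.inl v⟩ => Sum.inl ⟨⟨t, ht⟩, v⟩
    | ⟨⟨t, ht⟩, Sum.inr h⟩ => Sum.inr ⟨by rw [← ht]; exact congrArg g h.down⟩

/-- Retyping commutes with iterated context extension. -/
def dList {T T' : Type} (g : T → T') (V : T → Type) :
    ∀ l : List T, retypeObj g (extList V l) ⟶ extList (retypeObj g V) (l.map g)
  | [] => 𝟙 (retypeObj g V)
  | u :: l => dC g (extList V l) u ≫ extCMap (dList g V l) (g u)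

/-! ### Classic arities, typed signatures and their representations -/

/-- A classic arity of degree `deg` over `S`: a list of pairs (binding list, sort of
argument) and an output sort, all built from types of degree `deg`. -/
structure ClassicArity {J : Type} (S : J → ℕ) where
  deg : ℕ
  args : List (List (TyDeg S deg) × TyDeg S deg)
  out : TyDeg S deg

/-- The list of sorts bound in the `k`-th argument, evaluated in `A` at `t`. -/
def argCtx {J : Type} {S : J → ℕ} (α : ClassicArity S) (A : SRep S)
    (t : Fin α.deg → A.carrier) (k : Fin α.args.length) : List A.carrier :=
  (α.args.get k).1.map (TyDeg.eval A t)

/-- The sort of the `k`-th argument, evaluated in `A` at `t`. -/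
def argSort {J : Type} {S : J → ℕ} (α : ClassicArity S) (A : SRep S)
    (t : Fin α.deg → A.carrier) (k : Fin α.args.length) : A.carrier :=
  TyDeg.eval A t (α.args.get k).2

/-- The output sort, evaluated in `A` at `t`. -/
def outSort {J : Type} {S : J → ℕ} (α : ClassicArity S) (A : SRep S)
    (t : Fin α.deg → A.carrier) : A.carrier :=
  TyDeg.eval A t α.out

theorem argCtx_comm {J : Type} {S : J → ℕ} {A B : SRep S} (g : SRepHom A B)
    (α : ClassicArity S) (t : Fin α.deg → A.carrier) (k : Fin α.args.length) :
    argCtx α B (fun i => g.toFun (t i)) k = (argCtx α A t k).map g.toFun :=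
  TyDeg.evalList_comm g t _

theorem argSort_comm {J : Type} {S : J → ℕ} {A B : SRep S} (g : SRepHom A B)
    (α : ClassicArity S) (t : Fin α.deg → A.carrier) (k : Fin α.args.length) :
    argSort α B (fun i => g.toFun (t i)) k = g.toFun (argSort α A t k) :=
  TyDeg.eval_comm g t _

theorem outSort_comm {J : Type} {S : J → ℕ} {A B : SRep S} (g : SRepHom A B)
    (α : ClassicArity S) (t : Fin α.deg → A.carrier) :
    outSort α B (fun i => g.toFun (t i)) = g.toFun (outSort α A t) :=
  TyDeg.eval_comm g t _

/-- A representation of the term signature `Sg` over a fixed representation `A` of the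
type signature `S`: an `S`-monad `P` on `[A, Type]` together with, for each arity
`α ∈ Sg` of degree `n` and each `t ∈ A^n`, a module morphism
`dom(α, P)_t → cod(α, P)_t`: a family of maps from the product of the fibres (at the
argument sorts) of the derived modules of `P` to the fibre of `P` at the output sort,
natural in the context and compatible with the module substitutions. -/
structure SigRepOn {J I : Type} (S : J → ℕ) (Sg : I → ClassicArity S)
    (A : SRep S) where
  P : CategoryTheory.Monad (A.carrier → Type)
  rep : ∀ (i : I) (t : Fin (Sg i).deg → A.carrier) (V : A.carrier → Type),
      (∀ k : Fin (Sg i).args.length,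
        P.obj (extList V (argCtx (Sg i) A t k)) (argSort (Sg i) A t k)) →
      P.obj V (outSort (Sg i) A t)
  rep_natural : ∀ (i : I) (t : Fin (Sg i).deg → A.carrier)
      {V W : A.carrier → Type} (f : V ⟶ W)
      (a : ∀ k : Fin (Sg i).args.length,
        P.obj (extList V (argCtx (Sg i) A t k)) (argSort (Sg i) A t k)),
      rep i t W (fun k => P.map (extListMap f (argCtx (Sg i) A t k))
          (argSort (Sg i) A t k) (a k)) =
        P.map f (outSort (Sg i) A t) (rep i t V a)
  rep_mod : ∀ (i : I) (t : Fin (Sg i).deg → A.carrier) (V : A.carrier → Type)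
      (a : ∀ k : Fin (Sg i).args.length,
        P.obj (extList (P.obj V) (argCtx (Sg i) A t k)) (argSort (Sg i) A t k)),
      rep i t V (fun k => P.μ.app (extList V (argCtx (Sg i) A t k))
          (argSort (Sg i) A t k)
          (P.map (gammaList P (argCtx (Sg i) A t k) V) (argSort (Sg i) A t k)
            (a k))) =
        P.μ.app V (outSort (Sg i) A t) (rep i t (P.obj V) a)

/-- A representation of the typed signature `(S, Sg)`. -/
structure SigRep {J I : Type} (S : J → ℕ) (Sg : I → ClassicArity S) where
  sorts : SRep S
  str : SigRepOn S Sg sorts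

/-- A morphism of representations of `(S, Sg)`: a morphism `g` of representations of
`S` together with a colax monad morphism `f` over the retyping functor along `g`,
compatible with the representations of all the arities (modulo the canonical
identifications given by `g` and by the commutation of retyping with context
extension). -/
structure SigRepHom {J I : Type} {S : J → ℕ} {Sg : I → ClassicArity S}
    (X Y : SigRep S Sg) where
  g : SRepHom X.sorts Y.sorts
  f : ∀ V : X.sorts.carrier → Type,
      retypeObj g.toFun (X.str.P.obj V) ⟶ Y.str.P.obj (retypeObj g.toFun V)
  f_natural : ∀ {V W : X.sorts.carrier → Type} (k : V ⟶ W),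
      retypeMap g.toFun (X.str.P.map k) ≫ f W =
        f V ≫ Y.str.P.map (retypeMap g.toFun k)
  f_unit : ∀ V : X.sorts.carrier → Type,
      retypeMap g.toFun (X.str.P.η.app V) ≫ f V =
        Y.str.P.η.app (retypeObj g.toFun V)
  f_mul : ∀ V : X.sorts.carrier → Type,
      retypeMap g.toFun (X.str.P.μ.app V) ≫ f V =
        f (X.str.P.obj V) ≫ Y.str.P.map (f V) ≫
          Y.str.P.μ.app (retypeObj g.toFun V)
  rep_compat : ∀ (i : I) (t : Fin (Sg i).deg → X.sorts.carrier)
      (V : X.sorts.carrier → Type)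
      (a : ∀ k : Fin (Sg i).args.length,
        X.str.P.obj (extList V (argCtx (Sg i) X.sorts t k))
          (argSort (Sg i) X.sorts t k)),
      f V (g.toFun (outSort (Sg i) X.sorts t))
          ⟨⟨outSort (Sg i) X.sorts t, rfl⟩, X.str.rep i t V a⟩ =
        cast (by rw [outSort_comm])
          (Y.str.rep i (fun m => g.toFun (t m)) (retypeObj g.toFun V)
            (fun k => cast (by rw [argCtx_comm, argSort_comm])
              (Y.str.P.map (dList g.toFun V (argCtx (Sg i) X.sorts t k))
                (g.toFun (argSort (Sg i) X.sorts t k))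
                (f (extList V (argCtx (Sg i) X.sorts t k))
                  (g.toFun (argSort (Sg i) X.sorts t k))
                  ⟨⟨argSort (Sg i) X.sorts t k, rfl⟩, a k⟩))))

/-- The term monad associated to `(S, Sg)`: the inductive family of terms over a
context `V`, generated by variables-as-terms and by one constructor family for each
arity of `Sg`, indexed by the instantiations of its type variables. -/
inductive Tm {J I : Type} (S : J → ℕ) (Sg : I → ClassicArity S) :
    (What S → Type) → What S → Type 1
  | var {V : What S → Type} {s : What S} : V s → Tm S Sg V s
  | con (i : I) (t : Fin (Sg i).deg → What S) {V : What S → Type}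
      (a : ∀ k : Fin (Sg i).args.length,
        Tm S Sg (extList V (argCtx (Sg i) (initSRep S) t k))
          (argSort (Sg i) (initSRep S) t k)) :
      Tm S Sg V (outSort (Sg i) (initSRep S) t)



/-! ### Auxiliary development -/

section Aux

variable {J I : Type} {S : J → ℕ} {Sg : I → ClassicArity S}

/-- Renaming of terms. -/
def Tm.rename : ∀ {V W : What S → Type}, (V ⟶ W) → ∀ {s}, Tm S Sg V s → Tm S Sg W s
  | _, _, f, _, .var v => .var (f _ v)
  | _, _, f, _, .con i t a =>
      .con i t (fun k => (a k).rename (extListMap f (argCtx (Sg i) (initSRep S) t k)))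

/-- Lifting a substitution through one context extension. -/
def liftS {V W : What S → Type} (f : ∀ s, V s → Tm S Sg W s) (u : What S) :
    ∀ s, extC V u s → Tm S Sg (extC W u) s :=
  fun _ x => x.elim (fun v => (f _ v).rename (fun _ => TypeCat.ofHom fun y => Sum.inl y)) (fun h => .var (Sum.inr h))

/-- Lifting a substitution through iterated context extension. -/
def liftList {V W : What S → Type} (f : ∀ s, V s → Tm S Sg W s) :
    ∀ l : List (What S), ∀ s, extList V l s → Tm S Sg (extList W l) s
  | [] => f
  | u :: l => liftS (liftList f l) u

/-- Substitution of terms. -/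
def Tm.bind : ∀ {V W : What S → Type}, (∀ s, V s → Tm S Sg W s) → ∀ {s}, Tm S Sg V s → Tm S Sg W s
  | _, _, f, _, .var v => f _ v
  | _, _, f, _, .con i t a =>
      .con i t (fun k => (a k).bind (liftList f (argCtx (Sg i) (initSRep S) t k)))

end Aux

section Aux2

variable {J I : Type} {S : J → ℕ} {Sg : I → ClassicArity S}

theorem extCMap_id {T : Type} (V : T → Type) (u : T) :
    extCMap (𝟙 V) u = 𝟙 (extC V u) := by
  funext t; apply ConcreteCategory.hom_ext; intro x; cases x <;> rfl

theorem extListMap_id {T : Type} (V : T → Type) :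
    ∀ l : List T, extListMap (𝟙 V) l = 𝟙 (extList V l)
  | [] => rfl
  | u :: l => by
      show extCMap (extListMap (𝟙 V) l) u = _
      rw [extListMap_id V l]; exact extCMap_id _ u

theorem extCMap_comp {T : Type} {V W X : T → Type} (f : V ⟶ W) (g : W ⟶ X) (u : T) :
    extCMap (f ≫ g) u = extCMap f u ≫ extCMap g u := by
  funext t; apply ConcreteCategory.hom_ext; intro x; cases x <;> rfl

theorem extListMap_comp {T : Type} {V W X : T → Type} (f : V ⟶ W) (g : W ⟶ X) :
    ∀ l : List T, extListMap (f ≫ g) l = extListMap f l ≫ extListMap g l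
  | [] => rfl
  | u :: l => by
      show extCMap (extListMap (f ≫ g) l) u = _
      rw [extListMap_comp f g l]; exact extCMap_comp _ _ u

theorem Tm.rename_id {V : What S → Type} : ∀ {s} (x : Tm S Sg V s), x.rename (𝟙 V) = x
  | _, .var v => rfl
  | _, .con i t a => by
      show Tm.con i t _ = _
      congr 1; funext k
      erw [extListMap_id]
      exact Tm.rename_id (a k)

theorem Tm.rename_comp {V W X : What S → Type} (f : V ⟶ W) (g : W ⟶ X) :
    ∀ {s} (x : Tm S Sg V s), x.rename (f ≫ g) = (x.rename f).rename g
  | _, .var v => rfl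
  | _, .con i t a => by
      show Tm.con i t _ = Tm.con i t _
      congr 1; funext k
      erw [extListMap_comp]
      exact Tm.rename_comp _ _ (a k)

/-- `liftList` of a renaming-then-substitution. -/
theorem liftList_comp_left {V W X : What S → Type} (g : V ⟶ W)
    (f : ∀ s, W s → Tm S Sg X s) :
    ∀ (l : List (What S)) (s) (x : extList V l s),
      liftList (fun s v => f s (g s v)) l s x = liftList f l s (extListMap g l s x)
  | [], _, _ => rfl
  | u :: l, s, Sum.inl v => by
      show (liftList (fun s v => f s (g s v)) l s v).rename _ = _
      rw [liftList_comp_left g f l]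
      rfl
  | _ :: _, _, Sum.inr h => rfl

theorem Tm.bind_rename {V W X : What S → Type} (g : V ⟶ W)
    (f : ∀ s, W s → Tm S Sg X s) :
    ∀ {s} (x : Tm S Sg V s), (x.rename g).bind f = x.bind (fun s v => f s (g s v))
  | _, .var v => rfl
  | _, .con i t a => by
      show Tm.con i t _ = Tm.con i t _
      congr 1; funext k
      erw [Tm.bind_rename _ (liftList f _) (a k)]
      congr 1; funext s x
      exact (liftList_comp_left g f _ s x).symm

/-- Renaming after `liftList`. -/
theorem liftList_comp_right {V W X : What S → Type} (f : ∀ s, V s → Tm S Sg W s)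
    (g : W ⟶ X) :
    ∀ (l : List (What S)) (s) (x : extList V l s),
      liftList (fun s v => (f s v).rename g) l s x =
        (liftList f l s x).rename (extListMap g l)
  | [], _, _ => rfl
  | u :: l, s, Sum.inl v => by
      show Tm.rename _ (liftList (fun s v => (f s v).rename g) l s v) = _
      rw [liftList_comp_right f g l]
      show _ = Tm.rename (extCMap (extListMap g l) u) (Tm.rename _ (liftList f l s v))
      erw [← Tm.rename_comp, ← Tm.rename_comp]
      rfl
  | _ :: _, _, Sum.inr h => rfl

theorem Tm.rename_bind {V W X : What S → Type} (f : ∀ s, V s → Tm S Sg W s)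
    (g : W ⟶ X) :
    ∀ {s} (x : Tm S Sg V s), (x.bind f).rename g = x.bind (fun s v => (f s v).rename g)
  | _, .var v => rfl
  | _, .con i t a => by
      show Tm.con i t _ = Tm.con i t _
      congr 1; funext k
      rw [Tm.rename_bind (liftList f _) (extListMap g _) (a k)]
      congr 1; funext s x
      exact (liftList_comp_right f g _ s x).symm

theorem liftList_var {V : What S → Type} :
    ∀ (l : List (What S)) (s) (x : extList V l s),
      liftList (fun _ v => (Tm.var v : Tm S Sg _ _)) l s x = Tm.var x
  | [], _, _ => rfl
  | u :: l, s, Sum.inl v => by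
      show (liftList _ l s v).rename _ = _
      rw [liftList_var l]
      rfl
  | _ :: _, _, Sum.inr h => rfl

theorem Tm.bind_var {V : What S → Type} :
    ∀ {s} (x : Tm S Sg V s), x.bind (fun _ v => Tm.var v) = x
  | _, .var v => rfl
  | _, .con i t a => by
      show Tm.con i t _ = _
      congr 1; funext k
      conv_rhs => rw [← Tm.bind_var (a k)]
      congr 1; funext s x
      erw [liftList_var]

theorem liftList_bind {V W X : What S → Type} (f : ∀ s, V s → Tm S Sg W s)
    (g : ∀ s, W s → Tm S Sg X s) :
    ∀ (l : List (What S)) (s) (x : extList V l s),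
      liftList (fun s v => (f s v).bind g) l s x =
        (liftList f l s x).bind (liftList g l)
  | [], _, _ => rfl
  | u :: l, s, Sum.inl v => by
      show Tm.rename _ (liftList (fun s v => (f s v).bind g) l s v) = _
      rw [liftList_bind f g l]
      show _ = Tm.bind _ (Tm.rename _ (liftList f l s v))
      erw [Tm.bind_rename, Tm.rename_bind]
      rfl
  | _ :: _, _, Sum.inr h => rfl

theorem Tm.bind_bind {V W X : What S → Type} (f : ∀ s, V s → Tm S Sg W s)
    (g : ∀ s, W s → Tm S Sg X s) :
    ∀ {s} (x : Tm S Sg V s), (x.bind f).bind g = x.bind (fun s v => (f s v).bind g)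
  | _, .var v => rfl
  | _, .con i t a => by
      show Tm.con i t _ = Tm.con i t _
      congr 1; funext k
      rw [Tm.bind_bind (liftList f _) (liftList g _) (a k)]
      congr 1; funext s x
      exact (liftList_bind f g _ s x).symm

theorem Tm.rename_eq_bind {V W : What S → Type} (g : V ⟶ W) :
    ∀ {s} (x : Tm S Sg V s), x.rename g = x.bind (fun s v => Tm.var (g s v)) := by
  intro s x
  rw [show (fun s v => (Tm.var (g s v) : Tm S Sg W s)) =
      fun s v => ((Tm.var v : Tm S Sg V s).rename g) from rfl]
  rw [← Tm.rename_bind, Tm.bind_var]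

end Aux2

section Small

variable {J I : Type} {S : J → ℕ} {Sg : I → ClassicArity S}

/-- Small codes for terms over extensions of a fixed context `V`. -/
inductive TmCode {J I : Type} (S : J → ℕ) (Sg : I → ClassicArity S)
    (V : What S → Type) : Type
  | var (l : List (What S)) (s : What S) (x : extList V l s) : TmCode S Sg V
  | con (i : I) (t : Fin (Sg i).deg → What S)
      (a : Fin (Sg i).args.length → TmCode S Sg V) : TmCode S Sg V

/-- Iterated context extension is extension by the appended list. -/
def extListAppend {T : Type} {V : T → Type} (l : List T) :
    ∀ (l' : List T) (s : T), extList (extList V l) l' s ≃ extList V (l' ++ l) s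
  | [], _ => Equiv.refl _
  | _ :: l', s => Equiv.sumCongr (extListAppend l l' s) (Equiv.refl _)

/-- Rebasing codes: a code over `extList V l` is a code over `V`. -/
def TmCode.rebase {V : What S → Type} (l : List (What S)) :
    TmCode S Sg (extList V l) → TmCode S Sg V
  | .var l' s x => .var (l' ++ l) s (extListAppend l l' s x)
  | .con i t a => .con i t (fun k => (a k).rebase l)

theorem TmCode.rebase_inj {V : What S → Type} (l : List (What S)) :
    ∀ c c' : TmCode S Sg (extList V l), c.rebase l = c'.rebase l → c = c' := by
  intro c
  induction c with
  | var l' s x =>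
      intro c' h
      cases c' with
      | var l'' s' y =>
          rw [TmCode.rebase, TmCode.rebase] at h
          injection h with h1 h2 h3
          have hl : l' = l'' := List.append_cancel_right h1
          subst hl; subst h2
          rw [(extListAppend l l' s).injective (eq_of_heq h3)]
      | con i t a => exact absurd h (by simp [TmCode.rebase])
  | con i t a ih =>
      intro c' h
      cases c' with
      | var l'' s' y => exact absurd h (by simp [TmCode.rebase])
      | con i' t' a' =>
          rw [TmCode.rebase, TmCode.rebase] at h
          injection h with h1 h2 h3
          subst h1
          have ht : t = t' := eq_of_heq h2
          subst ht
          have ha : a = a' := by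
            funext k
            exact ih k (a' k) (congrFun (eq_of_heq h3) k)
          rw [ha]

/-- Encoding of terms as codes. -/
def Tm.encode {V : What S → Type} : ∀ {s}, Tm S Sg V s → TmCode S Sg V
  | s, .var v => .var [] s v
  | _, .con i t a =>
      .con i t (fun k =>
        (Tm.encode (a k)).rebase (argCtx (Sg i) (initSRep S) t k))

theorem Tm.encode_inj {V : What S → Type} :
    ∀ {s s'} (x : Tm S Sg V s) (y : Tm S Sg V s'),
      Tm.encode x = Tm.encode y → s = s' ∧ HEq x y := by
  intro s s' x
  induction x generalizing s' with
  | @var _ s v =>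
      intro y h
      cases y with
      | var w =>
          rw [Tm.encode, Tm.encode] at h
          injection h with h1 h2 h3
          subst h2
          cases h3
          exact ⟨rfl, HEq.rfl⟩
      | con i t a =>
          rw [Tm.encode, Tm.encode] at h
          exact absurd h (by simp)
  | con i t a ih =>
      intro y h
      cases y with
      | var w =>
          rw [Tm.encode, Tm.encode] at h
          exact absurd h (by simp)
      | @con i' t' _ a' =>
          rw [Tm.encode, Tm.encode] at h
          injection h with h1 h2 h3
          subst h1
          have ht : t = t' := eq_of_heq h2
          subst ht
          have ha : a = a' := by
            funext k
            have := congrFun (eq_of_heq h3) k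
            exact eq_of_heq
              (ih k (a' k) (TmCode.rebase_inj _ _ _ this)).2
          subst ha
          exact ⟨rfl, HEq.rfl⟩

instance {V : What S → Type} {s : What S} : Small.{0} (Tm S Sg V s) :=
  small_of_injective (f := fun x : Tm S Sg V s => Tm.encode x)
    (fun x y h => eq_of_heq (Tm.encode_inj x y h).2)

end Small

section Monad0

variable {J I : Type} {S : J → ℕ} {Sg : I → ClassicArity S}

noncomputable def shr {V : What S → Type} {s : What S} (x : Tm S Sg V s) :
    Shrink (Tm S Sg V s) := equivShrink _ x

noncomputable def ush {V : What S → Type} {s : What S} (x : Shrink (Tm S Sg V s)) :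
    Tm S Sg V s := (equivShrink _).symm x

@[simp] theorem ush_shr {V : What S → Type} {s : What S} (x : Tm S Sg V s) :
    ush (shr x) = x := (equivShrink _).symm_apply_apply x

@[simp] theorem shr_ush {V : What S → Type} {s : What S} (x : Shrink (Tm S Sg V s)) :
    shr (ush x) = x := (equivShrink _).apply_symm_apply x

/-- The term monad, shrunk to `Type 0`. -/
noncomputable def TmMon (S : J → ℕ) (Sg : I → ClassicArity S) :
    CategoryTheory.Monad (What S → Type) where
  obj V := fun s => Shrink (Tm S Sg V s)
  map {V W} f := fun _ => TypeCat.ofHom fun x => shr ((ush x).rename f)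
  map_id V := by
    funext s; apply ConcreteCategory.hom_ext; intro x
    show shr ((ush x).rename (𝟙 V)) = x
    rw [Tm.rename_id, shr_ush]
  map_comp {V W X} f g := by
    funext s; apply ConcreteCategory.hom_ext; intro x
    show shr ((ush x).rename (f ≫ g)) = shr ((ush (shr ((ush x).rename f))).rename g)
    rw [ush_shr, Tm.rename_comp]
  η :=
    { app := fun V _ => TypeCat.ofHom fun v => shr (.var v)
      naturality := fun V W f => by
        funext s; apply ConcreteCategory.hom_ext; intro v
        show shr (.var (f s v)) = shr ((ush (shr (.var v))).rename f)
        rw [ush_shr]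
        rfl }
  μ :=
    { app := fun V _ => TypeCat.ofHom fun x => shr ((ush x).bind (fun _ y => ush y))
      naturality := fun V W f => by
        funext s; apply ConcreteCategory.hom_ext; intro x
        show shr ((ush (shr ((ush x).rename (fun _ => TypeCat.ofHom fun y => shr ((ush y).rename f))))).bind
            (fun _ y => ush y)) =
          shr ((ush (shr ((ush x).bind (fun _ y => ush y)))).rename f)
        rw [ush_shr, ush_shr, Tm.bind_rename, Tm.rename_bind]
        congr 1
        congr 1
        funext s y
        erw [ush_shr] }
  assoc X := by
    funext s; apply ConcreteCategory.hom_ext; intro x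
    show shr ((ush (shr ((ush x).rename (fun _ => TypeCat.ofHom fun y => shr ((ush y).bind fun _ z => ush z))))).bind
        (fun _ y => ush y)) =
      shr ((ush (shr ((ush x).bind fun _ y => ush y))).bind (fun _ y => ush y))
    rw [ush_shr, ush_shr, Tm.bind_rename, Tm.bind_bind]
    congr 1
    congr 1
    funext s y
    erw [ush_shr]
  left_unit V := by
    funext s; apply ConcreteCategory.hom_ext; intro x
    show shr ((ush (shr (.var x))).bind (fun _ y => ush y)) = x
    rw [ush_shr]
    show shr (ush x) = x
    rw [shr_ush]
  right_unit V := by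
    funext s; apply ConcreteCategory.hom_ext; intro x
    show shr ((ush (shr ((ush x).rename (fun _ => TypeCat.ofHom fun v => shr (.var v))))).bind (fun _ y => ush y)) = x
    rw [ush_shr, Tm.bind_rename]
    show shr (Tm.bind (fun s (v : V s) => ush (shr (Tm.var v))) (ush x)) = x
    have : (fun (s : What S) (v : V s) => ush (shr (Tm.var (Sg := Sg) v))) =
        fun s v => Tm.var v := by funext s v; rw [ush_shr]
    rw [this, Tm.bind_var, shr_ush]

theorem gammaList_ush {V : What S → Type} :
    ∀ (l : List (What S)) (s : What S) (x : extList ((TmMon S Sg).obj V) l s),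
      ush (gammaList (TmMon S Sg) l V s x) = liftList (fun _ y => ush y) l s x
  | [], _, x => rfl
  | u :: l, s, Sum.inl v => by
      show ush (gammaC (TmMon S Sg) u (extList V l) s
        (Sum.inl (gammaList (TmMon S Sg) l V s v))) = _
      show ush (shr ((ush (gammaList (TmMon S Sg) l V s v)).rename _)) = _
      rw [ush_shr, gammaList_ush l]
      rfl
  | u :: l, s, Sum.inr h => by
      show ush (shr (Tm.var (V := extC (extList V l) u) (Sum.inr h))) =
        Tm.var (V := extC (extList V l) u) (Sum.inr h)
      rw [ush_shr]

/-- The initial representation structure. -/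
noncomputable def R0 (S : J → ℕ) (Sg : I → ClassicArity S) :
    SigRepOn S Sg (initSRep S) where
  P := TmMon S Sg
  rep i t V a := shr (.con i t (fun k => ush (a k)))
  rep_natural i t {V W} f a := by
    show shr (.con i t _) = shr ((ush (shr (.con i t _))).rename f)
    erw [ush_shr]
    show _ = shr (.con i t _)
    congr 1
    congr 1
    funext k
    show ush (shr ((ush (a k)).rename _)) = _
    erw [ush_shr]; rfl
  rep_mod i t V a := by
    show shr (.con i t _) = shr ((ush (shr (.con i t _))).bind (fun _ y => ush y))
    erw [ush_shr]
    show _ = shr (.con i t _)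
    congr 1
    congr 1
    funext k
    show ush (shr ((ush (shr ((ush (a k)).rename _))).bind _)) = _
    erw [ush_shr, ush_shr, Tm.bind_rename]
    congr 1
    funext s x
    show ush (gammaList (TmMon S Sg) _ V s x) = _
    exact gammaList_ush _ s x

end Monad0

section InitSorts

variable {J : Type} {S : J → ℕ}

/-- Fold from the initial representation. -/
def What.fold (A : SRep S) : What S → A.carrier
  | .mk j a => A.op j (fun i => (a i).fold A)

/-- The unique morphism out of the initial representation. -/
def foldHom (A : SRep S) : SRepHom (initSRep S) A :=
  ⟨What.fold A, fun _ _ => rfl⟩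

theorem fold_unique {A : SRep S} (h : SRepHom (initSRep S) A) :
    ∀ x, h.toFun x = What.fold A x
  | .mk j a => by
    have := h.compat j a
    rw [show (initSRep S).op j a = What.mk j a from rfl] at this
    rw [this, What.fold]
    congr 1
    funext i
    exact fold_unique h (a i)

theorem SRepHom.ext' {A B : SRep S} {h h' : SRepHom A B}
    (e : h.toFun = h'.toFun) : h = h' := by
  cases h; cases h'; cases e; rfl

theorem initSRep_initial (A : SRep S) : ∃! _ : SRepHom (initSRep S) A, True :=
  ⟨foldHom A, trivial, fun h _ => SRepHom.ext' (funext (fold_unique h))⟩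

/-- Transport a value along an equality of a pair of indices. -/
theorem cast_fam {T : Type u} {A B : T → Type} (φ : ∀ u, A u → B u) {u u' : T}
    (h : u = u') (hA : A u = A u') (hB : B u = B u') (z : A u) :
    φ u' (cast hA z) = cast hB (φ u z) := by subst h; rfl

theorem cast_eq_cast' {α β : Type} (h h' : α = β) {a b : α} (hab : a = b) :
    cast h a = cast h' b := by subst hab; subst h; rfl

end InitSorts

section Trans

variable {J I : Type} {S : J → ℕ} {Sg : I → ClassicArity S}

theorem dList_natural {T T' : Type} (g : T → T') {V W : T → Type} (k : V ⟶ W) :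
    ∀ l : List T,
      retypeMap g (extListMap k l) ≫ dList g W l =
        dList g V l ≫ extListMap (retypeMap g k) (l.map g)
  | [] => rfl
  | u :: l => by
      funext s'; apply ConcreteCategory.hom_ext; intro p
      obtain ⟨⟨w, hw⟩, x⟩ := p
      cases x with
      | inl v =>
          show Sum.inl (dList g W l s' (retypeMap g (extListMap k l) s' ⟨⟨w, hw⟩, v⟩)) =
            Sum.inl (extListMap (retypeMap g k) (l.map g) s' (dList g V l s' ⟨⟨w, hw⟩, v⟩))
          rw [show dList g W l s' (retypeMap g (extListMap k l) s' ⟨⟨w, hw⟩, v⟩) =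
            (retypeMap g (extListMap k l) ≫ dList g W l) s' ⟨⟨w, hw⟩, v⟩ from rfl,
            dList_natural g k l]
          rfl
      | inr h => rfl

variable (R : SigRep S Sg)


/-- Pointwise naturality of the unit. -/
theorem eta_pt {X Y : R.sorts.carrier → Type} (f : X ⟶ Y) (s) (p : X s) :
    R.str.P.η.app Y s (f s p) = R.str.P.map f s (R.str.P.η.app X s p) :=
  ConcreteCategory.congr_hom (congrFun (R.str.P.η.naturality f) s) p

/-- Pointwise naturality of the multiplication. -/
theorem mu_pt {X Y : R.sorts.carrier → Type} (f : X ⟶ Y) (s) (p : R.str.P.obj (R.str.P.obj X) s) :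
    R.str.P.μ.app Y s (R.str.P.map (R.str.P.map f) s p) = R.str.P.map f s (R.str.P.μ.app X s p) :=
  ConcreteCategory.congr_hom (congrFun (R.str.P.μ.naturality f) s) p

theorem lu_pt (X : R.sorts.carrier → Type) (s) (p : R.str.P.obj X s) :
    R.str.P.μ.app X s (R.str.P.η.app (R.str.P.obj X) s p) = p :=
  ConcreteCategory.congr_hom (congrFun (R.str.P.left_unit X) s) p

theorem map_pt {X Y Z : R.sorts.carrier → Type} (f : X ⟶ Y) (g : Y ⟶ Z) (s) (p : R.str.P.obj X s) :
    R.str.P.map (f ≫ g) s p = R.str.P.map g s (R.str.P.map f s p) :=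
  ConcreteCategory.congr_hom (congrFun (R.str.P.toFunctor.map_comp f g) s) p

theorem map_id_pt (X : R.sorts.carrier → Type) (s) (p : R.str.P.obj X s) :
    R.str.P.map (𝟙 X) s p = p :=
  ConcreteCategory.congr_hom (congrFun (R.str.P.toFunctor.map_id X) s) p

/-- Translation of a term along the unique morphism into `R.sorts`. -/
noncomputable def transT {V : What S → Type} :
    ∀ {s}, Tm S Sg V s →
      R.str.P.obj (retypeObj (foldHom R.sorts).toFun V) ((foldHom R.sorts).toFun s)
  | _, .var v => R.str.P.η.app _ _ ⟨⟨_, rfl⟩, v⟩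
  | _, .con i t a =>
      cast (by erw [outSort_comm (foldHom R.sorts)])
        (R.str.rep i (fun m => (foldHom R.sorts).toFun (t m)) _
          (fun k => cast (by erw [argCtx_comm (foldHom R.sorts), argSort_comm (foldHom R.sorts)])
            (R.str.P.map
              (dList (foldHom R.sorts).toFun V (argCtx (Sg i) (initSRep S) t k))
              ((foldHom R.sorts).toFun (argSort (Sg i) (initSRep S) t k))
              (transT (a k)))))

/-- The `k`-th argument constructor used in `transT`. -/
noncomputable def conArg (i : I) (t : Fin (Sg i).deg → What S) {V : What S → Type}
    (k : Fin (Sg i).args.length)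
    (y : R.str.P.obj (retypeObj (foldHom R.sorts).toFun (extList V (argCtx (Sg i) (initSRep S) t k)))
      ((foldHom R.sorts).toFun (argSort (Sg i) (initSRep S) t k))) :
    R.str.P.obj (extList (retypeObj (foldHom R.sorts).toFun V) (argCtx (Sg i) R.sorts (fun m => (foldHom R.sorts).toFun (t m)) k))
      (argSort (Sg i) R.sorts (fun m => (foldHom R.sorts).toFun (t m)) k) :=
  cast (by erw [argCtx_comm (foldHom R.sorts), argSort_comm (foldHom R.sorts)])
    (R.str.P.map (dList (foldHom R.sorts).toFun V (argCtx (Sg i) (initSRep S) t k))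
      ((foldHom R.sorts).toFun (argSort (Sg i) (initSRep S) t k)) y)

theorem transT_con (i : I) (t : Fin (Sg i).deg → What S) {V : What S → Type}
    (a : ∀ k : Fin (Sg i).args.length,
      Tm S Sg (extList V (argCtx (Sg i) (initSRep S) t k))
        (argSort (Sg i) (initSRep S) t k)) :
    transT R (Tm.con i t a) =
      cast (by erw [outSort_comm (foldHom R.sorts)])
        (R.str.rep i (fun m => (foldHom R.sorts).toFun (t m)) (retypeObj (foldHom R.sorts).toFun V)
          (fun k => conArg R i t k (transT R (a k)))) := rfl

/-- Cast-commutation: `map` along `extListMap` under list/sort equalities. -/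
theorem map_extList_cast {V W : R.sorts.carrier → Type} (f : V ⟶ W)
    {l l' : List R.sorts.carrier} (hl : l = l') {s s' : R.sorts.carrier} (hs : s = s')
    (h1 : R.str.P.obj (extList V l) s = R.str.P.obj (extList V l') s')
    (z : R.str.P.obj (extList V l) s) :
    R.str.P.map (extListMap f l') s' (cast h1 z) =
      cast (by rw [hl, hs]) (R.str.P.map (extListMap f l) s z) := by
  subst hl; subst hs; rfl

theorem map_cast_sort {V W : R.sorts.carrier → Type} (f : V ⟶ W)
    {s s' : R.sorts.carrier} (hs : s = s')
    (h1 : R.str.P.obj V s = R.str.P.obj V s') (x : R.str.P.obj V s) :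
    R.str.P.map f s' (cast h1 x) = cast (by rw [hs]) (R.str.P.map f s x) := by
  subst hs; rfl

theorem mu_cast_sort (V : R.sorts.carrier → Type) {s s' : R.sorts.carrier} (hs : s = s')
    (h1 : R.str.P.obj (R.str.P.obj V) s = R.str.P.obj (R.str.P.obj V) s') (x : R.str.P.obj (R.str.P.obj V) s) :
    R.str.P.μ.app V s' (cast h1 x) = cast (by rw [hs]) (R.str.P.μ.app V s x) := by
  subst hs; rfl

theorem mu_gamma_cast {X Y : R.sorts.carrier → Type} (τ : X ⟶ R.str.P.obj Y)
    {l l' : List R.sorts.carrier} (hl : l = l') {s s' : R.sorts.carrier} (hs : s = s')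
    (h1 : R.str.P.obj (extList X l) s = R.str.P.obj (extList X l') s')
    (w : R.str.P.obj (extList X l) s) :
    R.str.P.μ.app (extList Y l') s' (R.str.P.map (gammaList R.str.P l' Y) s'
        (R.str.P.map (extListMap τ l') s' (cast h1 w))) =
      cast (by rw [hl, hs]) (R.str.P.μ.app (extList Y l) s (R.str.P.map (gammaList R.str.P l Y) s
        (R.str.P.map (extListMap τ l) s w))) := by
  subst hl; subst hs; rfl

theorem conArg_natural (i : I) (t : Fin (Sg i).deg → What S) {V W : What S → Type}
    (f : V ⟶ W) (k : Fin (Sg i).args.length)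
    (y : R.str.P.obj (retypeObj (foldHom R.sorts).toFun (extList V (argCtx (Sg i) (initSRep S) t k)))
      ((foldHom R.sorts).toFun (argSort (Sg i) (initSRep S) t k))) :
    conArg R i t k
        (R.str.P.map (retypeMap (foldHom R.sorts).toFun (extListMap f (argCtx (Sg i) (initSRep S) t k))) _ y) =
      R.str.P.map (extListMap (retypeMap (foldHom R.sorts).toFun f) (argCtx (Sg i) R.sorts (fun m => (foldHom R.sorts).toFun (t m)) k))
        _ (conArg R i t k y) := by
  unfold conArg
  erw [← map_pt, dList_natural (foldHom R.sorts).toFun f (argCtx (Sg i) (initSRep S) t k),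
    map_pt]
  rw [map_extList_cast R (retypeMap (foldHom R.sorts).toFun f)
    (argCtx_comm (foldHom R.sorts) (Sg i) t k).symm
    (argSort_comm (foldHom R.sorts) (Sg i) t k).symm]
  rfl

/-- Translation of terms commutes with renaming. -/
theorem transT_rename {V W : What S → Type} (f : V ⟶ W) :
    ∀ {s} (x : Tm S Sg V s),
      transT R (x.rename f) = R.str.P.map (retypeMap (foldHom R.sorts).toFun f) ((foldHom R.sorts).toFun s) (transT R x)
  | _, .var v => eta_pt R (retypeMap (foldHom R.sorts).toFun f) _ ⟨⟨_, rfl⟩, v⟩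
  | _, .con i t a => by
      have IH : ∀ k, transT R ((a k).rename (extListMap f (argCtx (Sg i) (initSRep S) t k))) =
          R.str.P.map (retypeMap (foldHom R.sorts).toFun (extListMap f (argCtx (Sg i) (initSRep S) t k))) _
            (transT R (a k)) :=
        fun k => transT_rename (extListMap f _) (a k)
      show transT R (Tm.con i t fun k =>
        (a k).rename (extListMap f (argCtx (Sg i) (initSRep S) t k))) = _
      rw [transT_con, transT_con]
      erw [show (fun k => conArg R i t k (transT R ((a k).rename (extListMap f (argCtx (Sg i) (initSRep S) t k))))) =
        fun k => R.str.P.map (extListMap (retypeMap (foldHom R.sorts).toFun f) (argCtx (Sg i) R.sorts (fun m => (foldHom R.sorts).toFun (t m)) k)) _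
          (conArg R i t k (transT R (a k))) from funext fun k => (congrArg _ (IH k)).trans (conArg_natural R i t f k _)]
      rw [map_cast_sort R (retypeMap (foldHom R.sorts).toFun f) (outSort_comm (foldHom R.sorts) (Sg i) t),
        ← R.str.rep_natural]

/-- Translation of a substitution. -/
noncomputable def tau {V W : What S → Type} (σ : ∀ s, V s → Tm S Sg W s) :
    retypeObj (foldHom R.sorts).toFun V ⟶ R.str.P.obj (retypeObj (foldHom R.sorts).toFun W) :=
  fun _ => TypeCat.ofHom fun q => match q with
  | ⟨⟨s, hs⟩, v⟩ => hs ▸ transT R (σ s v)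

/-- The key colax compatibility of `tau` with context extension. -/
theorem tau_lift {V W : What S → Type} (σ : ∀ s, V s → Tm S Sg W s) :
    ∀ (l : List (What S)) (s') (p : retypeObj (foldHom R.sorts).toFun (extList V l) s'),
      R.str.P.map (dList (foldHom R.sorts).toFun W l) s' (tau R (liftList σ l) s' p) =
        gammaList R.str.P (l.map (foldHom R.sorts).toFun) (retypeObj (foldHom R.sorts).toFun W) s'
          (extListMap (tau R σ) (l.map (foldHom R.sorts).toFun) s' (dList (foldHom R.sorts).toFun V l s' p))
  | [], s', p => by
      show R.str.P.map (𝟙 _) s' (tau R σ s' p) = tau R σ s' p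
      exact map_id_pt R _ s' _
  | u :: l, s', ⟨⟨w, hw⟩, Sum.inl v⟩ => by
      subst hw
      have e1 := congrArg
        (R.str.P.map (dList (foldHom R.sorts).toFun W (u :: l)) ((foldHom R.sorts).toFun w))
        (transT_rename R (fun _ => TypeCat.ofHom fun y => (Sum.inl y : extC (extList W l) u _)) (liftList σ l w v))
      have e2 := (map_pt R
        (retypeMap (foldHom R.sorts).toFun (fun _ => TypeCat.ofHom fun y => (Sum.inl y : extC (extList W l) u _)))
        (dList (foldHom R.sorts).toFun W (u :: l)) ((foldHom R.sorts).toFun w)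
        (transT R (liftList σ l w v))).symm
      have e3 := map_pt R (dList (foldHom R.sorts).toFun W l)
        (fun _ => TypeCat.ofHom fun y => (Sum.inl y : extC (extList (retypeObj (foldHom R.sorts).toFun W)
          (l.map (foldHom R.sorts).toFun)) ((foldHom R.sorts).toFun u) _))
        ((foldHom R.sorts).toFun w) (transT R (liftList σ l w v))
      have e4 := congrArg
        (R.str.P.map (fun _ => TypeCat.ofHom fun y => (Sum.inl y : extC (extList (retypeObj (foldHom R.sorts).toFun W)
          (l.map (foldHom R.sorts).toFun)) ((foldHom R.sorts).toFun u) _))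
          ((foldHom R.sorts).toFun w))
        (tau_lift σ l ((foldHom R.sorts).toFun w) ⟨⟨w, rfl⟩, v⟩)
      exact e1.trans (e2.trans (e3.trans e4))
  | u :: l, s', ⟨⟨w, hw⟩, Sum.inr hh⟩ => by
      subst hw
      exact (eta_pt R (dList (foldHom R.sorts).toFun W (u :: l)) ((foldHom R.sorts).toFun w)
        ⟨⟨w, rfl⟩, Sum.inr hh⟩).symm

/-- Translation of terms commutes with substitution. -/
theorem transT_bind {V W : What S → Type} (σ : ∀ s, V s → Tm S Sg W s) :
    ∀ {s} (x : Tm S Sg V s),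
      transT R (x.bind σ) =
        R.str.P.μ.app (retypeObj (foldHom R.sorts).toFun W) ((foldHom R.sorts).toFun s) (R.str.P.map (tau R σ) ((foldHom R.sorts).toFun s) (transT R x))
  | _, .var v => by
      show transT R (σ _ v) = R.str.P.μ.app _ _ (R.str.P.map (tau R σ) _ (R.str.P.η.app _ _ ⟨⟨_, rfl⟩, v⟩))
      erw [← eta_pt, lu_pt]
      rfl
  | _, .con i t a => by
      have IH : ∀ k, transT R ((a k).bind (liftList σ (argCtx (Sg i) (initSRep S) t k))) =
          R.str.P.μ.app _ _ (R.str.P.map (tau R (liftList σ (argCtx (Sg i) (initSRep S) t k))) _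
            (transT R (a k))) :=
        fun k => transT_bind (liftList σ _) (a k)
      show transT R (Tm.con i t fun k =>
        (a k).bind (liftList σ (argCtx (Sg i) (initSRep S) t k))) = _
      rw [transT_con, transT_con]
      erw [show (fun k => conArg R i t k (transT R ((a k).bind (liftList σ (argCtx (Sg i) (initSRep S) t k))))) =
        fun k => conArg R i t k (R.str.P.μ.app _ _ (R.str.P.map (tau R (liftList σ (argCtx (Sg i) (initSRep S) t k))) _
          (transT R (a k)))) from funext fun k => congrArg _ (IH k)]
      -- move the cast out on the right-hand side
      rw [map_cast_sort R (tau R σ) (outSort_comm (foldHom R.sorts) (Sg i) t),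
        mu_cast_sort R _ (outSort_comm (foldHom R.sorts) (Sg i) t),
        ← R.str.rep_natural, ← R.str.rep_mod]
      -- now both sides are casts of `rep` applied to families; compare argumentwise
      apply cast_eq_cast'
      congr 1
      funext k
      -- per-argument goal
      rw [conArg, conArg]
      -- left side: push map dList through μ, use tau_lift
      erw [← mu_pt, ← map_pt, ← map_pt]
      have hstar : tau R (liftList σ (argCtx (Sg i) (initSRep S) t k)) ≫
          R.str.P.map (dList (foldHom R.sorts).toFun W (argCtx (Sg i) (initSRep S) t k)) =
          dList (foldHom R.sorts).toFun V (argCtx (Sg i) (initSRep S) t k) ≫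
            extListMap (tau R σ) ((argCtx (Sg i) (initSRep S) t k).map (foldHom R.sorts).toFun) ≫
            gammaList R.str.P ((argCtx (Sg i) (initSRep S) t k).map (foldHom R.sorts).toFun) (retypeObj (foldHom R.sorts).toFun W) := by
        funext s'; apply ConcreteCategory.hom_ext; intro p
        exact tau_lift R σ _ s' p
      erw [hstar]
      erw [map_pt, map_pt, map_pt]
      rw [mu_gamma_cast R (tau R σ)
        (argCtx_comm (foldHom R.sorts) (Sg i) t k).symm
        (argSort_comm (foldHom R.sorts) (Sg i) t k).symm]
      rfl

end Trans

section Final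

variable {J I : Type} {S : J → ℕ} {Sg : I → ClassicArity S} (R : SigRep S Sg)

/-- The colax monad morphism underlying the initial morphism. -/
noncomputable def fT (V : What S → Type) :
    retypeObj (foldHom R.sorts).toFun ((TmMon S Sg).obj V) ⟶
      R.str.P.obj (retypeObj (foldHom R.sorts).toFun V) :=
  tau R (fun _ y => ush y)

/-- The initial morphism of representations. -/
noncomputable def hom0 : SigRepHom ⟨initSRep S, R0 S Sg⟩ R where
  g := foldHom R.sorts
  f := fT R
  f_natural {V W} k := by
    funext s'; apply ConcreteCategory.hom_ext; intro p
    obtain ⟨⟨s, hs⟩, x⟩ := p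
    subst hs
    show transT R (ush (shr ((ush x).rename k))) =
      R.str.P.map (retypeMap (foldHom R.sorts).toFun k) _ (transT R (ush x))
    erw [ush_shr, transT_rename]
  f_unit V := by
    funext s'; apply ConcreteCategory.hom_ext; intro p
    obtain ⟨⟨s, hs⟩, v⟩ := p
    subst hs
    show transT R (ush (shr (Tm.var v))) = _
    erw [ush_shr]
    rfl
  f_mul V := by
    funext s'; apply ConcreteCategory.hom_ext; intro p
    obtain ⟨⟨s, hs⟩, x⟩ := p
    subst hs
    show transT R (ush (shr ((ush x).bind (fun _ y => ush y)))) = _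
    erw [ush_shr]
    exact transT_bind R (fun _ y => ush y) (ush x)
  rep_compat i t V a := by
    show transT R (ush (shr (Tm.con i t (fun k => ush (a k))))) = _
    erw [ush_shr, transT_con]
    exact cast_eq_cast' _ _ rfl

/-- Uniqueness of the colax component. -/
theorem f_unique
    (f₁ : ∀ V : What S → Type,
      retypeObj (foldHom R.sorts).toFun ((TmMon S Sg).obj V) ⟶
        R.str.P.obj (retypeObj (foldHom R.sorts).toFun V))
    (hunit : ∀ V, retypeMap (foldHom R.sorts).toFun ((TmMon S Sg).η.app V) ≫ f₁ V =
        R.str.P.η.app (retypeObj (foldHom R.sorts).toFun V))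
    (hcompat : ∀ (i : I) (t : Fin (Sg i).deg → What S) (V : What S → Type)
      (a : ∀ k : Fin (Sg i).args.length,
        (TmMon S Sg).obj (extList V (argCtx (Sg i) (initSRep S) t k))
          (argSort (Sg i) (initSRep S) t k)),
      f₁ V ((foldHom R.sorts).toFun (outSort (Sg i) (initSRep S) t))
          ⟨⟨outSort (Sg i) (initSRep S) t, rfl⟩, (R0 S Sg).rep i t V a⟩ =
        cast (by erw [outSort_comm (foldHom R.sorts)])
          (R.str.rep i (fun m => (foldHom R.sorts).toFun (t m))
            (retypeObj (foldHom R.sorts).toFun V)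
            (fun k => cast (by erw [argCtx_comm (foldHom R.sorts),
                argSort_comm (foldHom R.sorts)])
              (R.str.P.map
                (dList (foldHom R.sorts).toFun V (argCtx (Sg i) (initSRep S) t k))
                ((foldHom R.sorts).toFun (argSort (Sg i) (initSRep S) t k))
                (f₁ (extList V (argCtx (Sg i) (initSRep S) t k))
                  ((foldHom R.sorts).toFun (argSort (Sg i) (initSRep S) t k))
                  ⟨⟨argSort (Sg i) (initSRep S) t k, rfl⟩, a k⟩))))) :
    ∀ {V : What S → Type} {s} (y : Tm S Sg V s),
      f₁ V ((foldHom R.sorts).toFun s) ⟨⟨s, rfl⟩, shr y⟩ = transT R y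
  | V, s, .var v =>
      ConcreteCategory.congr_hom (congrFun (hunit V) ((foldHom R.sorts).toFun s)) ⟨⟨s, rfl⟩, v⟩
  | V, _, .con i t a => by
      have IH : ∀ k, f₁ (extList V (argCtx (Sg i) (initSRep S) t k))
          ((foldHom R.sorts).toFun (argSort (Sg i) (initSRep S) t k))
          ⟨⟨argSort (Sg i) (initSRep S) t k, rfl⟩, shr (a k)⟩ = transT R (a k) :=
        fun k => f_unique f₁ hunit hcompat (a k)
      have hc := hcompat i t V (fun k => shr (a k))
      have harg : (R0 S Sg).rep i t V (fun k => shr (a k)) = shr (Tm.con i t a) :=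
        congrArg shr (congrArg (Tm.con i t) (funext fun k => ush_shr (a k)))
      erw [harg] at hc
      rw [hc, transT_con]
      simp only [IH]
      exact cast_eq_cast' _ _ rfl

theorem hom0_unique (h : SigRepHom ⟨initSRep S, R0 S Sg⟩ R) : h = hom0 R := by
  obtain ⟨g₁, f₁, hnat, hunit, hmul, hcompat⟩ := h
  have hg : g₁ = foldHom R.sorts := SRepHom.ext' (funext (fold_unique g₁))
  subst hg
  have hf : f₁ = fT R := by
    funext V s'; apply ConcreteCategory.hom_ext; intro p
    obtain ⟨⟨s, hs⟩, x⟩ := p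
    subst hs
    have h1 := f_unique R f₁ hunit hcompat (ush x)
    erw [shr_ush] at h1
    exact h1
  subst hf
  rfl

end Final

theorem sigRep_initial' {J I : Type} (S : J → ℕ) (Sg : I → ClassicArity S) :
    ∃ R₀ : SigRepOn S Sg (initSRep S),
      (∀ A : SRep S, ∃! _ : SRepHom (initSRep S) A, True) ∧
      (∀ R : SigRep S Sg, ∃! _ : SigRepHom ⟨initSRep S, R₀⟩ R, True) ∧
      ∃ e : ∀ (V : What S → Type) (s : What S), R₀.P.obj V s ≃ Tm S Sg V s,
        (∀ (V : What S → Type) (s : What S) (v : V s),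
          e V s (R₀.P.η.app V s v) = .var v) ∧
        (∀ (i : I) (t : Fin (Sg i).deg → What S) (V : What S → Type)
            (a : ∀ k : Fin (Sg i).args.length,
              R₀.P.obj (extList V (argCtx (Sg i) (initSRep S) t k))
                (argSort (Sg i) (initSRep S) t k)),
          e V (outSort (Sg i) (initSRep S) t) (R₀.rep i t V a) =
            .con i t (fun k => e _ _ (a k))) := by
  refine ⟨R0 S Sg, initSRep_initial,
    fun R => ⟨hom0 R, trivial, fun h _ => hom0_unique R h⟩,
    fun V s => (equivShrink (Tm S Sg V s)).symm, fun V s v => ?_, fun i t V a => ?_⟩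
  · exact ush_shr _
  · show ush (shr (Tm.con i t fun k => ush (a k))) = Tm.con i t fun k => ush (a k)
    erw [ush_shr]
/-- **Initiality for typed signatures.** For every typed signature `(S, Sg)`, the
category of representations of `(S, Sg)` has an initial object: a representation over
the initial representation `Ŝ` of `S` admitting a unique morphism of representations
into every representation of `(S, Sg)`, and whose underlying monad is (in bijection
with, commuting with variables-as-terms and the constructors) the term monad freely
generated by the signature. -/
theorem sigRep_initial {J I : Type} (S : J → ℕ) (Sg : I → ClassicArity S) :
    ∃ R₀ : SigRepOn S Sg (initSRep S),
      (∀ A : SRep S, ∃! _ : SRepHom (initSRep S) A, True) ∧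
      (∀ R : SigRep S Sg, ∃! _ : SigRepHom ⟨initSRep S, R₀⟩ R, True) ∧
      ∃ e : ∀ (V : What S → Type) (s : What S), R₀.P.obj V s ≃ Tm S Sg V s,
        (∀ (V : What S → Type) (s : What S) (v : V s),
          e V s (R₀.P.η.app V s v) = .var v) ∧
        (∀ (i : I) (t : Fin (Sg i).deg → What S) (V : What S → Type)
            (a : ∀ k : Fin (Sg i).args.length,
              R₀.P.obj (extList V (argCtx (Sg i) (initSRep S) t k))
                (argSort (Sg i) (initSRep S) t k)),
          e V (outSort (Sg i) (initSRep S) t) (R₀.rep i t V a) =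
            .con i t (fun k => e _ _ (a k))) := by
  exact sigRep_initial' S Sg
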